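/- Let X be a compact Hausdorff space with uniformity 𝒰 and f : X → X continuous. For every entourage E ∈ 𝒰 there exist n ∈ ℕ and an entourage D ∈ 𝒰 such that for every D-pseudo-orbit (x_i)_{i≥0} there exists z ∈ X with ω(z) ⊆ B_E({x_0, …, x_n}). -/

import Mathlib

open UniformSpace Set

def omegaLim {X : Type*} [TopologicalSpace X] (f : X → X) (x : X) : Set X :=
  ⋂ N : ℕ, closure {y | ∃ n > N, f^[n] x = y}

/-- Finite-time tracking: a pseudo-orbit with small enough errors stays `V`-close
to the true orbit of its initial point for `n` steps. -/
lemma finite_time_track {X : Type*} [UniformSpace X] [CompactSpace X]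
    (f : X → X) (hf : Continuous f) (n : ℕ) :
    ∀ V ∈ uniformity X,
      ∃ D ∈ uniformity X, ∀ x : ℕ → X, (∀ i, (f (x i), x (i + 1)) ∈ D) →
        ∀ i ≤ n, (f^[i] (x 0), x i) ∈ V := by
  induction n with
  | zero =>
      intro V hV
      refine ⟨V, hV, fun x hx i hi => ?_⟩
      have : i = 0 := Nat.le_zero.mp hi
      subst this
      simpa using refl_mem_uniformity hV
  | succ n ih =>
      intro V hV
      obtain ⟨W, hW, hWsymm, hWW⟩ := comp_symm_of_uniformity hV
      have hfu : UniformContinuous f := CompactSpace.uniformContinuous_of_continuous hf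
      have hW' : (Prod.map f f) ⁻¹' W ∈ uniformity X := hfu hW
      obtain ⟨D₁, hD₁, hD₁prop⟩ := ih (V ∩ (Prod.map f f) ⁻¹' W) (Filter.inter_mem hV hW')
      refine ⟨D₁ ∩ W, Filter.inter_mem hD₁ hW, fun x hx i hi => ?_⟩
      have hx₁ : ∀ i, (f (x i), x (i + 1)) ∈ D₁ := fun i => (hx i).1
      rcases Nat.lt_or_ge i (n + 1) with h | h
      · exact (hD₁prop x hx₁ i (Nat.lt_succ_iff.mp h)).1
      · have hieq : i = n + 1 := le_antisymm hi h
        subst hieq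
        have h1 : (f^[n] (x 0), x n) ∈ (Prod.map f f) ⁻¹' W :=
          (hD₁prop x hx₁ n le_rfl).2
        have h2 : (f (f^[n] (x 0)), f (x n)) ∈ W := h1
        have h3 : (f (x n), x (n + 1)) ∈ W := (hx n).2
        have h4 : (f (f^[n] (x 0)), x (n + 1)) ∈ SetRel.comp W W := SetRel.prodMk_mem_comp h2 h3
        rw [Function.iterate_succ_apply']
        exact hWW h4

/-- Uniform covering: there is `n` such that for every `y` some ω-limit set is
contained in the `V`-balls around the first `n+1` points of the orbit of `y`. -/
lemma uniform_omega_cover {X : Type*} [UniformSpace X] [CompactSpace X]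
    (f : X → X) (hf : Continuous f) (V : Set (X × X)) (hV : V ∈ uniformity X) :
    ∃ n : ℕ, ∀ y : X, ∃ z : X,
      omegaLim f z ⊆ ⋃ i ∈ Finset.range (n + 1), ball (f^[i] y) V := by
  obtain ⟨V₂, hV₂, hV₂symm, hV₂V⟩ := comp_symm_of_uniformity hV
  obtain ⟨W, ⟨hWmem, hWopen, hWsymm⟩, hWsub⟩ :=
    uniformity_hasBasis_open_symmetric.mem_iff.mp hV₂
  -- For each y, the ω-limit set of y is covered by finitely many W-balls around its orbit.
  have key : ∀ y : X, ∃ m : ℕ,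
      omegaLim f y ⊆ ⋃ k ∈ Finset.range (m + 1), ball (f^[k] y) W := by
    intro y
    have hcover : omegaLim f y ⊆ ⋃ k : ℕ, ball (f^[k] y) W := by
      intro w hw
      have hw0 : w ∈ closure {y' | ∃ n > 0, f^[n] y = y'} := Set.mem_iInter.mp hw 0
      rcases mem_closure_iff_nhds.mp hw0 (ball w W) (ball_mem_nhds w hWmem) with
        ⟨s, hs1, k, _, hk⟩
      subst hk
      exact Set.mem_iUnion.mpr ⟨k, hWsymm.symm _ _ hs1⟩
    have hclosed : IsClosed (omegaLim f y) := isClosed_iInter fun _ => isClosed_closure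
    have hcomp : IsCompact (omegaLim f y) := hclosed.isCompact
    obtain ⟨t, ht⟩ := hcomp.elim_finite_subcover (fun k => ball (f^[k] y) W)
      (fun k => isOpen_ball _ hWopen) hcover
    refine ⟨t.sup id, fun w hw => ?_⟩
    rcases Set.mem_iUnion₂.mp (ht hw) with ⟨k, hk, hwk⟩
    exact Set.mem_iUnion₂.mpr ⟨k, Finset.mem_range.mpr
      (Nat.lt_succ_of_le (Finset.le_sup (f := id) hk)), hwk⟩
  choose M hM using key
  -- A neighborhood of y on which the covering persists (with V₂-balls).
  set U : X → Set X := fun y =>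
    ⋂ k ∈ Finset.range (M y + 1), (f^[k]) ⁻¹' (ball (f^[k] y) V₂) with hU
  have hUnhds : ∀ y : X, U y ∈ nhds y := by
    intro y
    refine (Filter.biInter_finset_mem _).mpr fun k _ => ?_
    exact (hf.iterate k).continuousAt.preimage_mem_nhds (ball_mem_nhds _ hV₂)
  obtain ⟨s, -, hs⟩ := isCompact_univ.elim_nhds_subcover U (fun y _ => hUnhds y)
  refine ⟨s.sup M, fun y' => ?_⟩
  rcases Set.mem_iUnion₂.mp (hs (Set.mem_univ y')) with ⟨y₀, hy₀s, hy₀⟩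
  refine ⟨y₀, fun w hw => ?_⟩
  rcases Set.mem_iUnion₂.mp (hM y₀ hw) with ⟨k, hk, hwk⟩
  have hk' : k ≤ M y₀ := Nat.lt_succ_iff.mp (Finset.mem_range.mp hk)
  have h1 : f^[k] y' ∈ ball (f^[k] y₀) V₂ := by
    have := Set.mem_iInter₂.mp hy₀ k (Finset.mem_range.mpr (Nat.lt_succ_of_le hk'))
    exact this
  have h2 : (f^[k] y', f^[k] y₀) ∈ V₂ := hV₂symm h1
  have h3 : (f^[k] y₀, w) ∈ V₂ := hWsub hwk
  have h4 : (f^[k] y', w) ∈ V := hV₂V (SetRel.prodMk_mem_comp h2 h3)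
  refine Set.mem_iUnion₂.mpr ⟨k, Finset.mem_range.mpr ?_, h4⟩
  exact Nat.lt_succ_of_le (le_trans hk' (Finset.le_sup hy₀s))

theorem omega_trapped_pseudoOrbit_uniform {X : Type*} [UniformSpace X] [CompactSpace X] [T2Space X]
    (f : X → X) (hf : Continuous f) (E : Set (X × X)) (hE : E ∈ uniformity X) :
    ∃ n : ℕ, ∃ D ∈ uniformity X, ∀ x : ℕ → X, (∀ i, (f (x i), x (i + 1)) ∈ D) →
      ∃ z : X, omegaLim f z ⊆ ⋃ i ∈ Finset.range (n + 1), UniformSpace.ball (x i) E := by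
  obtain ⟨V, hV, hVsymm, hVV⟩ := comp_symm_of_uniformity hE
  obtain ⟨n, hn⟩ := uniform_omega_cover f hf V hV
  obtain ⟨D, hD, hDprop⟩ := finite_time_track f hf n V hV
  refine ⟨n, D, hD, fun x hx => ?_⟩
  obtain ⟨z, hz⟩ := hn (x 0)
  refine ⟨z, fun w hw => ?_⟩
  rcases Set.mem_iUnion₂.mp (hz hw) with ⟨k, hk, hwk⟩
  have hkn : k ≤ n := Nat.lt_succ_iff.mp (Finset.mem_range.mp hk)
  have h1 : (f^[k] (x 0), x k) ∈ V := hDprop x hx k hkn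
  have h2 : (x k, f^[k] (x 0)) ∈ V := hVsymm h1
  have h3 : (f^[k] (x 0), w) ∈ V := hwk
  exact Set.mem_iUnion₂.mpr ⟨k, hk, hVV (SetRel.prodMk_mem_comp h2 h3)⟩
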